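/- Let (X,d,ν) be a weak CD(K,N) space with K>0 and 1<N<∞. Then the diameter of the support of ν is at most π√((N−1)/K). -/

import Mathlib

open Set Filter Topology

variable {X : Type*}

/-- Forward ball of an (possibly asymmetric) distance function. -/
def fwdBall (d : X → X → ℝ) (x : X) (r : ℝ) : Set X := {y | d x y < r}

/-- Backward ball. -/
def bwdBall (d : X → X → ℝ) (x : X) (r : ℝ) : Set X := {y | d y x < r}

/-- The forward topology, generated by forward balls. -/
def fwdTop (d : X → X → ℝ) : TopologicalSpace X :=
  TopologicalSpace.generateFrom {s | ∃ x r, s = fwdBall d x r}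

/-- The backward topology, generated by backward balls. -/
def bwdTop (d : X → X → ℝ) : TopologicalSpace X :=
  TopologicalSpace.generateFrom {s | ∃ x r, s = bwdBall d x r}

/-- `d` is an irreversible metric: nonnegative, vanishing exactly on the diagonal, and
satisfying the triangle inequality (symmetry is not required). -/
def IsIrrevMetric (d : X → X → ℝ) : Prop :=
  (∀ x y, 0 ≤ d x y) ∧ (∀ x y, d x y = 0 ↔ x = y) ∧ ∀ x y z, d x z ≤ d x y + d y z

/-- `(X, star, d)` is a pointed forward `Θ`-metric space: `Θ` is nondecreasing with values ≥ 1
and the reversibility of the closure (in the forward topology) of each forward ball of radius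
`r > 0` about `star` is bounded by `Θ r`. -/
def PointedForwardTheta (d : X → X → ℝ) (star : X) (Θ : ℝ → ℝ) : Prop :=
  Monotone Θ ∧ (∀ r, 1 ≤ Θ r) ∧
  ∀ r > 0, ∀ x ∈ @closure X (fwdTop d) (fwdBall d star r),
    ∀ y ∈ @closure X (fwdTop d) (fwdBall d star r), d x y ≤ Θ r * d y x
open MeasureTheory
open scoped ENNReal

/-- The support of a measure, with respect to the forward topology of `d`. -/
def msupport (d : X → X → ℝ) [MeasurableSpace X] (μ : Measure X) : Set X :=
  {x | ∀ U : Set X, @IsOpen X (fwdTop d) U → x ∈ U → 0 < μ U}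

/-- The total transport cost of a plan `π` for the cost `d(x,y)^p`. -/
noncomputable def transportCost [MeasurableSpace X] (d : X → X → ℝ) (p : ℝ)
    (π : Measure (X × X)) : ℝ≥0∞ :=
  ∫⁻ z, ENNReal.ofReal (d z.1 z.2) ^ p ∂π

/-- `π` is a coupling (transference plan) from `μ` to `ν`. -/
def IsCoupling [MeasurableSpace X] (π : Measure (X × X)) (μ ν : Measure X) : Prop :=
  π.map Prod.fst = μ ∧ π.map Prod.snd = ν

/-- The (possibly asymmetric) `p`-Wasserstein distance from `μ` to `ν`. -/
noncomputable def wassDist [MeasurableSpace X] (d : X → X → ℝ) (p : ℝ)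
    (μ ν : Measure X) : ℝ≥0∞ :=
  (⨅ π : {π : Measure (X × X) // IsCoupling π μ ν}, transportCost d p π.1) ^ (1 / p)

/-- `π` is an optimal transference plan from `μ` to `ν` for the cost `d²`. -/
def IsOptimalCoupling [MeasurableSpace X] (d : X → X → ℝ) (π : Measure (X × X))
    (μ ν : Measure X) : Prop :=
  IsCoupling π μ ν ∧ ∀ π' : Measure (X × X), IsCoupling π' μ ν →
    transportCost d 2 π ≤ transportCost d 2 π'

/-- The positive part of an extended real, as an extended nonnegative real. -/
noncomputable def eposPart (x : EReal) : ℝ≥0∞ := if x = ⊤ then ⊤ else ENNReal.ofReal x.toReal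

/-- Extended-real-valued integral, defined through positive and negative parts. -/
noncomputable def elint {α : Type*} [MeasurableSpace α] (μ : Measure α) (f : α → EReal) :
    EReal :=
  ((∫⁻ a, eposPart (f a) ∂μ : ℝ≥0∞) : EReal) - ((∫⁻ a, eposPart (-f a) ∂μ : ℝ≥0∞) : EReal)

/-- The asymptotic slope `U'(∞) = lim_{r→∞} U(r)/r` of a convex `U` with `U 0 = 0`
(the supremum of the slopes). -/
noncomputable def slopeTop (U : ℝ → ℝ) : EReal :=
  ⨆ r : {r : ℝ // 0 < r}, ((U r.1 / r.1 : ℝ) : EReal)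

/-- The right derivative `U'(0⁺)` of a convex `U` with `U 0 = 0` (the infimum of the
slopes). -/
noncomputable def slopeZero (U : ℝ → ℝ) : EReal :=
  ⨅ r : {r : ℝ // 0 < r}, ((U r.1 / r.1 : ℝ) : EReal)

/-- The integral functional `U_ν(μ) = ∫ U(ρ) dν + U'(∞)·μ_s[X]`, where `μ = ρν + μ_s` is the
Lebesgue decomposition of `μ` with respect to `ν`. -/
noncomputable def Unu [MeasurableSpace X] (U : ℝ → ℝ) (ν μ : Measure X) : EReal :=
  elint ν (fun x => ((U ((μ.rnDeriv ν x).toReal) : ℝ) : EReal)) +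
    slopeTop U * (((μ.singularPart ν) Set.univ : ℝ≥0∞) : EReal)

/-- The distorted integrand `U(ρ/β)·β`, with the convention `U(ρ/∞)·∞ = U'(0⁺)·ρ`. -/
noncomputable def distInt (U : ℝ → ℝ) (ρ : ℝ) (b : ℝ≥0∞) : EReal :=
  if b = ⊤ then slopeZero U * ((ρ : ℝ) : EReal)
  else ((U (ρ / b.toReal) * b.toReal : ℝ) : EReal)

/-- The distorted integral functional
`U^β_{π,ν}(μ) = ∫∫ U(ρ(x)/β(x,y)) β(x,y) π(dy|x) ν(dx) + U'(∞)·μ_s[X]`, where the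
disintegration `π(dy|x)` is given by the kernel `κ` and `ρ = dμ/dν`. -/
noncomputable def Ubeta [MeasurableSpace X] (U : ℝ → ℝ) (β : X → X → ℝ≥0∞)
    (κ : ProbabilityTheory.Kernel X X) (ν μ : Measure X) : EReal :=
  elint ν (fun x => elint (κ x) (fun y => distInt U ((μ.rnDeriv ν x).toReal) (β x y))) +
    slopeTop U * (((μ.singularPart ν) Set.univ : ℝ≥0∞) : EReal)

/-- The comparison function `𝔰_{K,N}`. -/
noncomputable def sKN (K N r : ℝ) : ℝ :=
  if 0 < K then Real.sqrt ((N - 1) / K) * Real.sin (r * Real.sqrt (K / (N - 1)))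
  else if K = 0 then r
  else Real.sqrt ((N - 1) / (-K)) * Real.sinh (r * Real.sqrt ((-K) / (N - 1)))

/-- The distortion coefficients `β^{(K,N)}_t` for `N < ∞`, as a function of the (directed)
distance: `β^{(K,N)}_t = (𝔰_{K,N}(t·dist)/(t·𝔰_{K,N}(dist)))^{N−1}`, equal to `∞` when
`K > 0` and `dist ≥ π√((N−1)/K)`, and equal to `1` for `t = 0` or `dist = 0`. -/
noncomputable def betaKN (K N t dist : ℝ) : ℝ≥0∞ :=
  if t = 0 ∨ dist = 0 then 1
  else if 0 < K ∧ Real.pi * Real.sqrt ((N - 1) / K) ≤ dist then ⊤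
  else ENNReal.ofReal ((sKN K N (t * dist) / (t * sKN K N dist)) ^ (N - 1))

/-- The displacement convexity class `DC_N` for `N < ∞`: continuous convex `U` with
`U(0) = 0`, twice continuously differentiable on `(0,∞)`, such that
`δ ↦ δ^N U(δ^{-N})` is convex on `(0,∞)`. -/
def MemDCN (N : ℝ) (U : ℝ → ℝ) : Prop :=
  ContinuousOn U (Set.Ici 0) ∧ ConvexOn ℝ (Set.Ici 0) U ∧ U 0 = 0 ∧
  ContDiffOn ℝ 2 U (Set.Ioi 0) ∧
  ConvexOn ℝ (Set.Ioi 0) (fun δ : ℝ => δ ^ N * U (δ ^ (-N)))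

/-- The weak curvature-dimension condition `CD(K,N)` (for finite `N`) of
the forward metric-measure space `(X,d,ν)`: for any two compactly supported probability
measures `μ₀, μ₁` with supports inside `supp ν` there exist a displacement interpolation
`(μ_t)` (a constant-speed geodesic in the 2-Wasserstein space) and an associated optimal
transference plan `π` (disintegrated by Markov kernels `κ, κ'` over its two marginals) such
that the distorted displacement convexity inequality holds for every `U ∈ DC_N`. -/
def WeakCD [MeasurableSpace X] (d : X → X → ℝ) (ν : Measure X) (K N : ℝ) : Prop :=
  ∀ μ₀ μ₁ : Measure X, IsProbabilityMeasure μ₀ → IsProbabilityMeasure μ₁ →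
    (∃ C₀ : Set X, @IsCompact X (fwdTop d) C₀ ∧ μ₀ C₀ᶜ = 0) →
    (∃ C₁ : Set X, @IsCompact X (fwdTop d) C₁ ∧ μ₁ C₁ᶜ = 0) →
    msupport d μ₀ ⊆ msupport d ν → msupport d μ₁ ⊆ msupport d ν →
    ∃ (μ : ℝ → Measure X) (π : Measure (X × X)) (κ κ' : ProbabilityTheory.Kernel X X),
      μ 0 = μ₀ ∧ μ 1 = μ₁ ∧ (∀ t ∈ Set.Icc (0:ℝ) 1, IsProbabilityMeasure (μ t)) ∧
      (∀ s t : ℝ, 0 ≤ s → s ≤ t → t ≤ 1 →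
        wassDist d 2 (μ s) (μ t) = ENNReal.ofReal (t - s) * wassDist d 2 μ₀ μ₁) ∧
      IsOptimalCoupling d π μ₀ μ₁ ∧
      ProbabilityTheory.IsMarkovKernel κ ∧ ProbabilityTheory.IsMarkovKernel κ' ∧
      π = MeasureTheory.Measure.compProd μ₀ κ ∧
      π.map Prod.swap = MeasureTheory.Measure.compProd μ₁ κ' ∧
      ∀ U : ℝ → ℝ, MemDCN N U → ∀ t ∈ Set.Icc (0:ℝ) 1,
        Unu U ν (μ t) ≤
          ((1 - t : ℝ) : EReal) *
              Ubeta U (fun x y => betaKN K N (1 - t) (d x y)) κ ν μ₀ +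
            ((t : ℝ) : EReal) *
              Ubeta U (fun y x => betaKN K N t (d x y)) κ' ν μ₁

/-! ### Auxiliary lemmas -/

noncomputable def Ustd (N : ℝ) : ℝ → ℝ := fun r => -(r ^ (1 - 1/N))

lemma eposPart_coe (r : ℝ) : eposPart ((r : ℝ) : EReal) = ENNReal.ofReal r := by
  simp [eposPart]

lemma eposPart_neg_coe (r : ℝ) : eposPart (-((r : ℝ) : EReal)) = ENNReal.ofReal (-r) := by
  rw [← EReal.coe_neg]; simp [eposPart]

lemma eposPart_bot : eposPart (⊥ : EReal) = 0 := by
  simp [eposPart]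

lemma eposPart_neg_bot : eposPart (-(⊥ : EReal)) = ⊤ := by
  simp [eposPart]

lemma elint_eq_bot {α : Type*} [MeasurableSpace α] (μ : Measure α) (f : α → EReal)
    (h : ∫⁻ a, eposPart (-(f a)) ∂μ = ⊤) : elint μ f = ⊥ := by
  unfold elint
  rw [h, EReal.coe_ennreal_top, EReal.sub_top]

lemma elint_ne_bot {α : Type*} [MeasurableSpace α] (μ : Measure α) (f : α → EReal)
    (h : ∫⁻ a, eposPart (-(f a)) ∂μ ≠ ⊤) : elint μ f ≠ ⊥ := by
  unfold elint
  intro heq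
  rw [sub_eq_add_neg] at heq
  rcases EReal.add_eq_bot_iff.mp heq with h' | h'
  · exact EReal.coe_ennreal_ne_bot _ h'
  · rw [EReal.neg_eq_bot_iff, EReal.coe_ennreal_eq_top_iff] at h'
    exact h h'

lemma Ustd_convexPart {N : ℝ} (hN : 1 < N) :
    ConvexOn ℝ (Set.Ioi 0) (fun δ : ℝ => δ ^ N * Ustd N (δ ^ (-N))) := by
  have key : ∀ δ : ℝ, δ ∈ Set.Ioi (0:ℝ) → δ ^ N * Ustd N (δ ^ (-N)) = -δ := by
    intro δ hδ
    have hδ0 : (0:ℝ) < δ := hδ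
    have hNne : N ≠ 0 := by intro h; rw [h] at hN; linarith
    simp only [Ustd]
    rw [← Real.rpow_mul hδ0.le]
    have hexp : (-N) * (1 - 1/N) = 1 - N := by field_simp; ring
    rw [hexp, mul_neg, ← Real.rpow_add hδ0, show N + (1 - N) = 1 by ring, Real.rpow_one]
  refine ⟨convex_Ioi 0, ?_⟩
  intro a ha b hb s t hs ht hst
  dsimp only
  have hmem : s • a + t • b ∈ Set.Ioi (0:ℝ) := (convex_Ioi 0) ha hb hs ht hst
  rw [key _ hmem, key _ ha, key _ hb]
  simp only [smul_eq_mul]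
  ring_nf
  linarith [le_refl (s * a + t * b)]

lemma Ustd_memDCN {N : ℝ} (hN : 1 < N) : MemDCN N (Ustd N) := by
  have hN0 : (0:ℝ) < N := by linarith
  have hp0 : 0 < 1 - 1/N := by
    have h1 : 1/N < 1 := (div_lt_one hN0).mpr hN
    linarith
  have hp1 : 1 - 1/N < 1 := by
    have h1 : 0 < 1/N := by positivity
    linarith
  refine ⟨?_, ?_, ?_, ?_, ?_⟩
  · exact ((Real.continuous_rpow_const hp0.le).neg).continuousOn
  · exact (Real.strictConcaveOn_rpow hp0 hp1).concaveOn.neg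
  · show -((0:ℝ) ^ (1 - 1/N)) = 0
    rw [Real.zero_rpow hp0.ne', neg_zero]
  · intro z hz
    exact ((Real.contDiffAt_rpow_const_of_ne (ne_of_gt hz)).neg).contDiffWithinAt
  · exact Ustd_convexPart hN

lemma slopeZero_Ustd {N : ℝ} (hN : 1 < N) : slopeZero (Ustd N) = ⊥ := by
  have hN0 : (0:ℝ) < N := by linarith
  have hval : ∀ M : ℝ, 0 < M →
      ∃ r : {r : ℝ // 0 < r}, ((Ustd N r.1 / r.1 : ℝ) : EReal) = ((-M : ℝ) : EReal) := by
    intro M hM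
    have hr : (0:ℝ) < M ^ (-N) := Real.rpow_pos_of_pos hM _
    refine ⟨⟨M ^ (-N), hr⟩, ?_⟩
    have h1 : ((M ^ (-N) : ℝ)) ^ ((1 - 1/N) - 1) =
        (M ^ (-N) : ℝ) ^ (1 - 1/N) / (M ^ (-N) : ℝ) ^ (1:ℝ) := Real.rpow_sub hr _ _
    rw [Real.rpow_one] at h1
    have h2 : ((M ^ (-N) : ℝ)) ^ ((1 - 1/N) - 1) = M := by
      rw [← Real.rpow_mul hM.le, show (-N) * ((1 - 1/N) - 1) = 1 by field_simp; ring,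
        Real.rpow_one]
    have h3 : Ustd N (M ^ (-N)) / (M ^ (-N)) = -M := by
      simp only [Ustd]
      rw [neg_div, ← h1, h2]
    rw [h3]
  unfold slopeZero
  rw [iInf_eq_bot]
  intro b hb
  cases b with
  | bot => exact absurd hb (lt_irrefl _)
  | coe q =>
    have hMpos : (0:ℝ) < |q| + 1 := by positivity
    obtain ⟨r, hr⟩ := hval (|q| + 1) hMpos
    refine ⟨r, ?_⟩
    rw [hr]
    exact EReal.coe_lt_coe_iff.mpr (by linarith [neg_abs_le q])
  | top =>
    obtain ⟨r, hr⟩ := hval 1 one_pos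
    exact ⟨r, by rw [hr]; exact EReal.coe_lt_top _⟩

/-- A weak `CD(K,N)` space with `K > 0` and `1 < N < ∞` has
`diam (supp ν) ≤ π √((N−1)/K)`. -/
theorem stmt17 [mX : MeasurableSpace X] (d : X → X → ℝ) (hd : IsIrrevMetric d)
    (hmX : mX = @borel X (fwdTop d))
    (hbc : ∀ (x : X) (r : ℝ), @IsCompact X (fwdTop d) (@closure X (fwdTop d) (fwdBall d x r)))
    (hgeo : ∀ x y : X, ∃ γ : ℝ → X, (∀ s t : ℝ, 0 ≤ s → s ≤ t → t ≤ 1 →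
      d (γ s) (γ t) = (t - s) * d (γ 0) (γ 1)) ∧ γ 0 = x ∧ γ 1 = y)
    (ν : Measure X) [SigmaFinite ν]
    (K N : ℝ) (hK : 0 < K) (hN : 1 < N)
    (hCD : WeakCD d ν K N) :
    ∀ x ∈ msupport d ν, ∀ y ∈ msupport d ν,
      d x y ≤ Real.pi * Real.sqrt ((N - 1) / K) := by
  subst hmX
  letI : MeasurableSpace X := @borel X (fwdTop d)
  letI : TopologicalSpace X := fwdTop d
  intro x hx y hy
  by_contra hxy
  push_neg at hxy
  obtain ⟨hd0, hdeq, hdtri⟩ := hd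
  set L : ℝ := Real.pi * Real.sqrt ((N - 1) / K) with hLdef
  have hLpos : 0 < L := mul_pos Real.pi_pos (Real.sqrt_pos.mpr (div_pos (by linarith) hK))
  set ε : ℝ := d x y - L with hεdef
  have hεpos : 0 < ε := by simp only [hεdef]; linarith
  have hmeas_open : ∀ s : Set X, IsOpen[fwdTop d] s → MeasurableSet[@borel X (fwdTop d)] s :=
    fun s hs => MeasurableSpace.measurableSet_generateFrom hs
  have hball_open : ∀ (z : X) (r : ℝ), IsOpen[fwdTop d] (fwdBall d z r) := fun z r =>
    TopologicalSpace.isOpen_generateFrom_of_mem ⟨z, r, rfl⟩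
  have hselfmem : ∀ (z : X) (r : ℝ), 0 < r → z ∈ fwdBall d z r := by
    intro z r hr
    show d z z < r
    rw [(hdeq z z).mpr rfl]
    exact hr
  have hνA : 0 < ν (fwdBall d x ε) := hx _ (hball_open x ε) (hselfmem x ε hεpos)
  have hexists : ∃ n : ℕ, 0 < ν (fwdBall d x ε ∩ MeasureTheory.spanningSets ν n) := by
    by_contra hcon
    push_neg at hcon
    have h0 : ν (fwdBall d x ε) = 0 := by
      have hcover : fwdBall d x ε = ⋃ n, fwdBall d x ε ∩ MeasureTheory.spanningSets ν n := by
        rw [← Set.inter_iUnion, MeasureTheory.iUnion_spanningSets, Set.inter_univ]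
      rw [hcover]
      exact measure_iUnion_null fun n => le_antisymm (hcon n) zero_le
    exact absurd h0 hνA.ne'
  obtain ⟨n, hA'pos⟩ := hexists
  set A' : Set X := fwdBall d x ε ∩ MeasureTheory.spanningSets ν n with hA'def
  have hA'meas : MeasurableSet A' :=
    (hmeas_open _ (hball_open x ε)).inter (MeasureTheory.measurableSet_spanningSets ν n)
  have hA'fin : ν A' < ⊤ :=
    lt_of_le_of_lt (measure_mono Set.inter_subset_right)
      (MeasureTheory.measure_spanningSets_lt_top ν n)
  set c : ℝ≥0∞ := (ν A')⁻¹ with hcdef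
  have hc_ne_top : c ≠ ⊤ := ENNReal.inv_ne_top.mpr hA'pos.ne'
  have hc_ne_zero : c ≠ 0 := ENNReal.inv_ne_zero.mpr hA'fin.ne
  have hct : 0 < c.toReal := ENNReal.toReal_pos hc_ne_zero hc_ne_top
  set μ₀ : Measure X := c • ν.restrict A' with hμ₀def
  set μ₁ : Measure X := Measure.dirac y with hμ₁def
  have hP0 : IsProbabilityMeasure μ₀ := by
    constructor
    rw [hμ₀def, Measure.smul_apply, Measure.restrict_apply_univ, smul_eq_mul]
    exact ENNReal.inv_mul_cancel hA'pos.ne' hA'fin.ne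
  have hP1 : IsProbabilityMeasure μ₁ := by rw [hμ₁def]; infer_instance
  haveI := hP0
  haveI := hP1
  have hy_meas : MeasurableSet ({y} : Set X) := by
    have hsing : ({y} : Set X) = ⋂ m : ℕ, fwdBall d y (1/(m+1)) := by
      ext z
      simp only [Set.mem_singleton_iff, Set.mem_iInter]
      constructor
      · intro hz m
        rw [hz]
        exact hselfmem y _ (by positivity)
      · intro hz
        have hdz : d y z ≤ 0 := by
          by_contra hpos
          push_neg at hpos
          obtain ⟨m, hm⟩ := exists_nat_one_div_lt hpos
          exact absurd (hz m) (not_lt.mpr hm.le)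
        exact ((hdeq y z).mp (le_antisymm hdz (hd0 y z))).symm
    rw [hsing]
    exact MeasurableSet.iInter fun m => hmeas_open _ (hball_open y _)
  have hyc_meas : MeasurableSet ({y}ᶜ : Set X) := hy_meas.compl
  have hcpt0 : ∃ C : Set X, @IsCompact X (fwdTop d) C ∧ μ₀ Cᶜ = 0 := by
    refine ⟨closure (fwdBall d x ε), hbc x ε, ?_⟩
    have hsub : A' ⊆ closure (fwdBall d x ε) :=
      Set.inter_subset_left.trans subset_closure
    rw [hμ₀def, Measure.smul_apply, Measure.restrict_apply' hA'meas]
    have hempty : (closure (fwdBall d x ε))ᶜ ∩ A' = ∅ := by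
      rw [Set.eq_empty_iff_forall_notMem]
      rintro z ⟨hz1, hz2⟩
      exact hz1 (hsub hz2)
    rw [hempty, measure_empty, smul_eq_mul, mul_zero]
  have hcpt1 : ∃ C : Set X, @IsCompact X (fwdTop d) C ∧ μ₁ Cᶜ = 0 := by
    refine ⟨closure (fwdBall d y 1), hbc y 1, ?_⟩
    have hyC : y ∈ closure (fwdBall d y 1) :=
      subset_closure (hselfmem y 1 one_pos)
    have hCmeas : MeasurableSet ((closure (fwdBall d y 1))ᶜ) :=
      hmeas_open _ (isClosed_closure.isOpen_compl)
    rw [hμ₁def, MeasureTheory.Measure.dirac_apply' y hCmeas]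
    simp [hyC]
  have hsupp0 : msupport d μ₀ ⊆ msupport d ν := by
    intro z hz U hU hzU
    by_contra hν0
    push_neg at hν0
    have hU0 : ν U = 0 := le_zero_iff.mp hν0
    have hμU : μ₀ U = 0 := by
      rw [hμ₀def, Measure.smul_apply, Measure.restrict_apply' hA'meas, smul_eq_mul,
        measure_mono_null Set.inter_subset_left hU0, mul_zero]
    exact absurd (hz U hU hzU) (by simp [hμU])
  have hsupp1 : msupport d μ₁ ⊆ msupport d ν := by
    intro z hz U hU hzU
    have h1 : 0 < μ₁ U := hz U hU hzU
    have hyU : y ∈ U := by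
      by_contra hyU
      have hμU : μ₁ U = 0 := by
        rw [hμ₁def, MeasureTheory.Measure.dirac_apply' y (hmeas_open U hU)]
        simp [hyU]
      simp [hμU] at h1
    exact hy U hU hyU
  obtain ⟨μ, π, κ, κ', hμ0, hμ1, hμprob, hgeod, hopt, hκM, hκ'M, hπ, hπswap, hineq⟩ :=
    hCD μ₀ μ₁ hP0 hP1 hcpt0 hcpt1 hsupp0 hsupp1
  haveI := hκM
  haveI := hκ'M
  -- the kernel sends ν-a.e. point of A' to y
  have hπy : (∫⁻ a, κ a {y}ᶜ ∂μ₀) = 0 := by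
    have h1 : π (Prod.snd ⁻¹' ({y}ᶜ : Set X)) = 0 := by
      rw [← MeasureTheory.Measure.map_apply measurable_snd hyc_meas, hopt.1.2, hμ₁def,
        MeasureTheory.Measure.dirac_apply' y hyc_meas]
      simp
    rw [hπ, MeasureTheory.Measure.compProd_apply (measurable_snd hyc_meas)] at h1
    exact h1
  have hκy : ∀ᵐ a ∂ν, a ∈ A' → κ a {y}ᶜ = 0 := by
    have h2 : ∀ᵐ a ∂μ₀, κ a {y}ᶜ = 0 :=
      (MeasureTheory.lintegral_eq_zero_iff
        (ProbabilityTheory.Kernel.measurable_coe κ hyc_meas)).mp hπy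
    rw [hμ₀def] at h2
    exact (MeasureTheory.ae_restrict_iff' hA'meas).mp ((MeasureTheory.Measure.ae_ennreal_smul_measure_iff hc_ne_zero).mp h2)
  -- the density of μ₀
  haveI : IsFiniteMeasure (ν.restrict A') := ⟨by rwa [Measure.restrict_apply_univ]⟩
  have hrn : μ₀.rnDeriv ν =ᵐ[ν] fun a => c * A'.indicator 1 a := by
    have h1 := MeasureTheory.Measure.rnDeriv_smul_left_of_ne_top' (ν.restrict A') ν hc_ne_top
    have h2 := MeasureTheory.Measure.rnDeriv_restrict_self ν hA'meas
    rw [← hμ₀def] at h1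
    filter_upwards [h1, h2] with a ha1 ha2
    rw [ha1, Pi.smul_apply, ha2, smul_eq_mul]
  -- distances from A' to y are large
  have hdLA : ∀ a ∈ A', L ≤ d a y := by
    intro a ha
    have h1 : d x a < ε := ha.1
    have h2 : d x y ≤ d x a + d a y := hdtri x a y
    simp only [hεdef] at h1
    linarith
  have hbeta : ∀ a ∈ A', betaKN K N (1 - 0) (d a y) = ⊤ := by
    intro a ha
    have h1 : L ≤ d a y := hdLA a ha
    have h2 : d a y ≠ 0 := by linarith
    rw [betaKN, if_neg (by push_neg; exact ⟨by norm_num, h2⟩),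
      if_pos ⟨hK, by rw [← hLdef]; exact h1⟩]
  -- absolute continuity and singular part
  have hac : μ₀ ≪ ν := by
    intro s hs
    rw [hμ₀def, Measure.smul_apply, Measure.restrict_apply' hA'meas, smul_eq_mul,
      measure_mono_null Set.inter_subset_left hs, mul_zero]
  have hsing0 : μ₀.singularPart ν = 0 :=
    (MeasureTheory.Measure.singularPart_eq_zero μ₀ ν).mpr hac
  -- the functional U
  have hUmem : MemDCN N (Ustd N) := Ustd_memDCN hN
  have hU0 : Ustd N 0 = 0 := hUmem.2.2.1
  have hsz : slopeZero (Ustd N) = ⊥ := slopeZero_Ustd hN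
  have key := hineq (Ustd N) hUmem 0 ⟨le_refl 0, zero_le_one⟩
  rw [hμ0] at key
  -- the first distorted functional is ⊥
  have hFbot : ∀ᵐ a ∂ν, a ∈ A' →
      (elint (κ a) fun b =>
        distInt (Ustd N) ((μ₀.rnDeriv ν a).toReal) (betaKN K N (1 - 0) (d a b))) = ⊥ := by
    filter_upwards [hrn, hκy] with a ha1 ha2
    intro haA'
    have hρ : (μ₀.rnDeriv ν a).toReal = c.toReal := by
      rw [ha1]
      simp [Set.indicator_of_mem haA']
    have haey : ∀ᵐ b ∂(κ a), b = y := by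
      rw [MeasureTheory.ae_iff]
      have : {b : X | ¬b = y} = ({y}ᶜ : Set X) := rfl
      rw [this]
      exact ha2 haA'
    have hdi : ∀ b : X, b = y →
        distInt (Ustd N) ((μ₀.rnDeriv ν a).toReal) (betaKN K N (1 - 0) (d a b)) = ⊥ := by
      rintro b rfl
      rw [hbeta a haA', distInt, if_pos rfl, hρ, hsz]
      exact EReal.bot_mul_of_pos (EReal.coe_pos.mpr hct)
    have h2 : ∫⁻ b, eposPart
        (-(distInt (Ustd N) ((μ₀.rnDeriv ν a).toReal) (betaKN K N (1 - 0) (d a b)))) ∂(κ a)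
        = ⊤ := by
      rw [lintegral_congr_ae (haey.mono fun b hb => by rw [hdi b hb, eposPart_neg_bot])]
      simp [MeasureTheory.lintegral_const]
    exact elint_eq_bot _ _ h2
  have hUbeta : Ubeta (Ustd N) (fun a b => betaKN K N (1 - 0) (d a b)) κ ν μ₀ = ⊥ := by
    have hQ : ∫⁻ a, eposPart
        (-(elint (κ a) fun b =>
          distInt (Ustd N) ((μ₀.rnDeriv ν a).toReal) (betaKN K N (1 - 0) (d a b)))) ∂ν
        = ⊤ := by
      refine le_antisymm le_top ?_
      calc (⊤:ℝ≥0∞) = ⊤ * ν A' := (ENNReal.top_mul hA'pos.ne').symm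
        _ = ∫⁻ _ in A', ⊤ ∂ν := (MeasureTheory.setLIntegral_const A' ⊤).symm
        _ = ∫⁻ a in A', eposPart
            (-(elint (κ a) fun b =>
              distInt (Ustd N) ((μ₀.rnDeriv ν a).toReal) (betaKN K N (1 - 0) (d a b)))) ∂ν := by
          refine lintegral_congr_ae ?_
          have hres := (MeasureTheory.ae_restrict_iff' hA'meas).mpr hFbot
          filter_upwards [hres] with a ha
          rw [ha, eposPart_neg_bot]
        _ ≤ _ := MeasureTheory.setLIntegral_le_lintegral A' _
    show elint ν (fun a => elint (κ a) fun b =>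
        distInt (Ustd N) ((μ₀.rnDeriv ν a).toReal) (betaKN K N (1 - 0) (d a b))) +
      slopeTop (Ustd N) * (((μ₀.singularPart ν) Set.univ : ℝ≥0∞) : EReal) = ⊥
    rw [elint_eq_bot _ _ hQ, hsing0]
    simp
  -- the LHS is not ⊥
  have hLHS : Unu (Ustd N) ν μ₀ ≠ ⊥ := by
    have hcong : (fun a => eposPart (-(((Ustd N ((μ₀.rnDeriv ν a).toReal) : ℝ) : EReal)))) =ᵐ[ν]
        fun a => A'.indicator (fun _ => ENNReal.ofReal (-(Ustd N c.toReal))) a := by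
      filter_upwards [hrn] with a ha
      by_cases haA' : a ∈ A'
      · rw [ha]
        simp only [Set.indicator_of_mem haA', Pi.one_apply, mul_one]
        rw [eposPart_neg_coe]
      · rw [ha]
        simp only [Set.indicator_of_notMem haA', Pi.one_apply, mul_zero]
        rw [ENNReal.toReal_zero, hU0, eposPart_neg_coe, neg_zero, ENNReal.ofReal_zero]
    have hQ' : (∫⁻ a, eposPart (-(((Ustd N ((μ₀.rnDeriv ν a).toReal) : ℝ) : EReal))) ∂ν) ≠ ⊤ := by
      rw [lintegral_congr_ae hcong, MeasureTheory.lintegral_indicator hA'meas,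
        MeasureTheory.setLIntegral_const]
      exact (ENNReal.mul_lt_top ENNReal.ofReal_lt_top hA'fin).ne
    show elint ν (fun a => ((Ustd N ((μ₀.rnDeriv ν a).toReal) : ℝ) : EReal)) +
      slopeTop (Ustd N) * (((μ₀.singularPart ν) Set.univ : ℝ≥0∞) : EReal) ≠ ⊥
    rw [hsing0]
    simp only [Measure.coe_zero, Pi.zero_apply, EReal.coe_ennreal_zero, mul_zero, add_zero]
    exact elint_ne_bot _ _ hQ'
  -- conclude
  have hRHS : ((1 - (0:ℝ) : ℝ) : EReal) *
        Ubeta (Ustd N) (fun x y => betaKN K N (1 - 0) (d x y)) κ ν μ₀ +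
      (((0:ℝ) : ℝ) : EReal) *
        Ubeta (Ustd N) (fun y x => betaKN K N 0 (d x y)) κ' ν μ₁ = ⊥ := by
    rw [hUbeta]
    norm_num
  rw [hRHS] at key
  exact hLHS (le_bot_iff.mp key)
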